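/- Let T be the diagonal maximal torus of SL_{n+1}(k) acting on SL_{n+1}(k) by left multiplication and let H = S(GL_n × GL₁) act by right multiplication. Then the algebra of (T × H)-invariant regular functions on SL_{n+1}(k) is a polynomial algebra freely generated by the n functions M₁y₁, …, Mₙyₙ, where Mᵢ is the minor obtained by deleting row i and the last column and yᵢ is the (i, n+1) entry. -/

import Mathlib

variable (k : Type) [Field k] [CharZero k] [IsAlgClosed k] (n : ℕ)

/-- A matrix of `SL_{n+1}` lies in the diagonal maximal torus `T`. -/
def IsDiagSL (t : Matrix.SpecialLinearGroup (Fin (n + 1)) k) : Prop :=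
  ∀ i j : Fin (n + 1), i ≠ j → t.1 i j = 0

/-- A matrix of `SL_{n+1}` lies in `H = S(GL_n × GL₁)`, the subgroup of block-diagonal
matrices with blocks of sizes `n` and `1`. -/
def IsBlockDiagSL (h : Matrix.SpecialLinearGroup (Fin (n + 1)) k) : Prop :=
  ∀ i : Fin n, h.1 i.castSucc (Fin.last n) = 0 ∧ h.1 (Fin.last n) i.castSucc = 0

/-- Regular functions on `SL_{n+1}`: the subalgebra generated by the coordinates. -/
def regularSL : Subalgebra k (Matrix.SpecialLinearGroup (Fin (n + 1)) k → k) :=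
  Algebra.adjoin k (Set.range fun p : Fin (n + 1) × Fin (n + 1) =>
    fun X : Matrix.SpecialLinearGroup (Fin (n + 1)) k => X.1 p.1 p.2)

/-- Functions invariant under `t·X = tX` for `t ∈ T` and `h·X = Xh⁻¹` for
`h ∈ S(GL_n × GL₁)`. -/
def invTH : Subalgebra k (Matrix.SpecialLinearGroup (Fin (n + 1)) k → k) where
  carrier := {φ | (∀ t, IsDiagSL k n t → ∀ X, φ (t * X) = φ X) ∧
    (∀ h, IsBlockDiagSL k n h → ∀ X, φ (X * h⁻¹) = φ X)}
  mul_mem' := by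
    intro a b ha hb
    exact ⟨fun t ht X => by simp [Pi.mul_apply, ha.1 t ht X, hb.1 t ht X],
      fun h hh X => by simp [Pi.mul_apply, ha.2 h hh X, hb.2 h hh X]⟩
  add_mem' := by
    intro a b ha hb
    exact ⟨fun t ht X => by simp [Pi.add_apply, ha.1 t ht X, hb.1 t ht X],
      fun h hh X => by simp [Pi.add_apply, ha.2 h hh X, hb.2 h hh X]⟩
  algebraMap_mem' := by exact fun c => ⟨fun t ht X => rfl, fun h hh X => rfl⟩

/-- The function `Mᵢyᵢ` for `i = 1,…,n`: the minor obtained by deleting row `i` and the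
last column, times the `(i, n+1)` entry. -/
def MyFn (i : Fin n) : Matrix.SpecialLinearGroup (Fin (n + 1)) k → k :=
  fun X => (X.1.submatrix i.castSucc.succAbove Fin.castSucc).det * X.1 i.castSucc (Fin.last n)

namespace Stmt10Aux
open Matrix BigOperators Finset

variable {k : Type} [Field k] {n : ℕ}

/-- matrices of the form [[I, y],[c, w]] -/
def shape (c y : Fin n → k) (w : k) : Matrix (Fin (n+1)) (Fin (n+1)) k :=
  Matrix.of fun i j =>
    Fin.lastCases (Fin.lastCases w c j)
      (fun i' => Fin.lastCases (y i') (fun j' => if i' = j' then (1:k) else 0) j) i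

@[simp] lemma shape_cc (c y : Fin n → k) (w : k) (i j : Fin n) :
    shape c y w i.castSucc j.castSucc = if i = j then 1 else 0 := by
  simp [shape]

@[simp] lemma shape_cl (c y : Fin n → k) (w : k) (i : Fin n) :
    shape c y w i.castSucc (Fin.last n) = y i := by simp [shape]

@[simp] lemma shape_lc (c y : Fin n → k) (w : k) (j : Fin n) :
    shape c y w (Fin.last n) j.castSucc = c j := by simp [shape]

@[simp] lemma shape_ll (c y : Fin n → k) (w : k) :
    shape c y w (Fin.last n) (Fin.last n) = w := by simp [shape]

lemma e_inl (i : Fin n) : Fin.castAdd 1 i = i.castSucc := rfl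

lemma e_inr (x : Fin 1) : Fin.natAdd n x = Fin.last n := by
  ext; simp [Fin.fin_one_eq_zero x]

/-- determinant of a shape matrix -/
lemma det_shape (c y : Fin n → k) (w : k) :
    (shape c y w).det = w - ∑ i, c i * y i := by
  rw [← Matrix.det_submatrix_equiv_self (finSumFinEquiv : Fin n ⊕ Fin 1 ≃ Fin (n+1))]
  have : (shape c y w).submatrix finSumFinEquiv finSumFinEquiv =
      Matrix.fromBlocks 1 (Matrix.of fun i (_ : Fin 1) => y i)
        (Matrix.of fun (_ : Fin 1) j => c j) (Matrix.of fun (_ _ : Fin 1) => w) := by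
    ext i j
    cases i with
    | inl i => cases j with
      | inl j => simp [Matrix.submatrix_apply, e_inl, Matrix.one_apply]
      | inr j => simp [Matrix.submatrix_apply, e_inl, e_inr]
    | inr i => cases j with
      | inl j => simp [Matrix.submatrix_apply, e_inl, e_inr]
      | inr j => simp [Matrix.submatrix_apply, e_inr]
  rw [this, Matrix.det_fromBlocks_one₁₁]
  rw [Matrix.det_fin_one]
  simp [Matrix.mul_apply, mul_comm]


/-- the sign `(-1)^(n-1+i)` -/
def sgn (n : ℕ) (i : Fin n) : k := (-1) ^ ((n : ℕ) + 1 + (i : ℕ))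

lemma sgn_mul_self (i : Fin n) : (sgn n i : k) * sgn n i = 1 := by
  simp [sgn, ← pow_add, (by ring : n + 1 + i + (n + 1 + i) = 2 * (n + 1 + i)), pow_mul]

lemma castSucc_succAbove_last {m : ℕ} (i : Fin (m+1)) :
    i.castSucc.succAbove (Fin.last m) = Fin.last (m+1) := by
  rw [Fin.succAbove_of_le_castSucc, Fin.succ_last]
  exact Fin.castSucc_le_castSucc_iff.2 (Fin.le_last i)

/-- determinant of the minor of a shape matrix obtained by deleting row `i` and the
last column -/
lemma det_shape_minor (c y : Fin n → k) (w : k) (i : Fin n) :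
    ((shape c y w).submatrix i.castSucc.succAbove Fin.castSucc).det = sgn n i * c i := by
  cases n with
  | zero => exact i.elim0
  | succ m =>
    set M := (shape c y w).submatrix i.castSucc.succAbove Fin.castSucc with hM
    rw [Matrix.det_succ_row M (Fin.last m)]
    have hlast : ∀ j : Fin (m+1), M (Fin.last m) j = c j := by
      intro j
      simp [hM, Matrix.submatrix_apply, castSucc_succAbove_last]
    have hminor : ∀ (j : Fin (m+1)) (r s : Fin m),
        M.submatrix (Fin.last m).succAbove j.succAbove r s
          = if i.succAbove r = j.succAbove s then (1:k) else 0 := by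
      intro j r s
      simp only [Matrix.submatrix_apply, hM, Fin.succAbove_last]
      rw [Fin.castSucc_succAbove_castSucc, shape_cc]
    rw [Finset.sum_eq_single i]
    · have h1 : M.submatrix (Fin.last m).succAbove i.succAbove = 1 := by
        ext r s
        rw [hminor i r s, Matrix.one_apply]
        simp [Fin.succAbove_right_injective.eq_iff]
      have hsgn : ((-1 : k)) ^ (((Fin.last m : Fin (m+1)) : ℕ) + (i : ℕ))
          = sgn (m+1) i := by
        rw [sgn, Fin.val_last, show m + 1 + 1 + (i:ℕ) = (m + (i:ℕ)) + 2 by ring,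
          pow_add, pow_add, pow_add]
        norm_num
      rw [h1, hlast, Matrix.det_one, mul_one, hsgn]
    · intro j _ hji
      obtain ⟨r₀, hr₀⟩ := Fin.exists_succAbove_eq hji
      have hrow : M.submatrix (Fin.last m).succAbove j.succAbove r₀ = 0 := by
        funext s
        rw [hminor j r₀ s, hr₀]
        simp [(Fin.succAbove_ne j s).symm]
      rw [Matrix.det_eq_zero_of_row_eq_zero r₀ (fun s => congrFun hrow s)]
      ring
    · intro h
      exact absurd (Finset.mem_univ i) h


section Blk
/-- block diagonal matrices [[B,0],[0,e]] -/
def blk (B : Matrix (Fin n) (Fin n) k) (e : k) : Matrix (Fin (n+1)) (Fin (n+1)) k :=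
  Matrix.of fun i j =>
    Fin.lastCases (Fin.lastCases e (fun _ => 0) j)
      (fun i' => Fin.lastCases 0 (fun j' => B i' j') j) i

@[simp] lemma blk_cc (B : Matrix (Fin n) (Fin n) k) (e : k) (i j : Fin n) :
    blk B e i.castSucc j.castSucc = B i j := by simp [blk]
@[simp] lemma blk_cl (B : Matrix (Fin n) (Fin n) k) (e : k) (i : Fin n) :
    blk B e i.castSucc (Fin.last n) = 0 := by simp [blk]
@[simp] lemma blk_lc (B : Matrix (Fin n) (Fin n) k) (e : k) (j : Fin n) :
    blk B e (Fin.last n) j.castSucc = 0 := by simp [blk]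
@[simp] lemma blk_ll (B : Matrix (Fin n) (Fin n) k) (e : k) :
    blk B e (Fin.last n) (Fin.last n) = e := by simp [blk]

lemma det_blk (B : Matrix (Fin n) (Fin n) k) (e : k) :
    (blk B e).det = B.det * e := by
  rw [← Matrix.det_submatrix_equiv_self (finSumFinEquiv : Fin n ⊕ Fin 1 ≃ Fin (n+1))]
  have : (blk B e).submatrix finSumFinEquiv finSumFinEquiv =
      Matrix.fromBlocks B 0 0 (Matrix.of fun (_ _ : Fin 1) => e) := by
    ext i j
    cases i with
    | inl i => cases j with
      | inl j => simp [Matrix.submatrix_apply, e_inl]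
      | inr j => simp [Matrix.submatrix_apply, e_inl, e_inr]
    | inr i => cases j with
      | inl j => simp [Matrix.submatrix_apply, e_inl, e_inr]
      | inr j => simp [Matrix.submatrix_apply, e_inr]
  rw [this, Matrix.det_fromBlocks_zero₂₁, Matrix.det_fin_one]
  rfl

lemma blk_one : (blk (1 : Matrix (Fin n) (Fin n) k) 1) = 1 := by
  ext i j
  refine Fin.lastCases ?_ (fun i' => ?_) i <;> refine Fin.lastCases ?_ (fun j' => ?_) j <;>
    simp [Matrix.one_apply, Fin.castSucc_inj, (Fin.castSucc_lt_last _).ne,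
      (Fin.castSucc_lt_last _).ne']

lemma mul_blk_castSucc (X : Matrix (Fin (n+1)) (Fin (n+1)) k)
    (B : Matrix (Fin n) (Fin n) k) (e : k) (r : Fin (n+1)) (j : Fin n) :
    (X * blk B e) r j.castSucc = ∑ m : Fin n, X r m.castSucc * B m j := by
  rw [Matrix.mul_apply, Fin.sum_univ_castSucc]
  simp

lemma mul_blk_last (X : Matrix (Fin (n+1)) (Fin (n+1)) k)
    (B : Matrix (Fin n) (Fin n) k) (e : k) (r : Fin (n+1)) :
    (X * blk B e) r (Fin.last n) = X r (Fin.last n) * e := by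
  rw [Matrix.mul_apply, Fin.sum_univ_castSucc]
  simp

lemma blk_mul_blk (B B' : Matrix (Fin n) (Fin n) k) (e e' : k) :
    blk B e * blk B' e' = blk (B * B') (e * e') := by
  ext i j
  refine Fin.lastCases ?_ (fun i' => ?_) j
  · rw [mul_blk_last]
    refine Fin.lastCases ?_ (fun i' => ?_) i <;> simp
  · rw [mul_blk_castSucc]
    refine Fin.lastCases ?_ (fun r => ?_) i <;> simp [Matrix.mul_apply]

end Blk

section Group
variable {kk : Type} [Field kk] {m : ℕ}

lemma diag_coe (t : Matrix.SpecialLinearGroup (Fin (m+1)) kk) (ht : IsDiagSL kk m t) :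
    t.1 = Matrix.diagonal (fun i => t.1 i i) := by
  ext i j
  by_cases hij : i = j
  · subst hij; simp
  · rw [Matrix.diagonal_apply_ne _ hij, ht i j hij]

lemma blockdiag_coe (h : Matrix.SpecialLinearGroup (Fin (m+1)) kk)
    (hh : IsBlockDiagSL kk m h) :
    h.1 = blk (h.1.submatrix Fin.castSucc Fin.castSucc)
      (h.1 (Fin.last m) (Fin.last m)) := by
  ext i j
  refine Fin.lastCases ?_ (fun i' => ?_) i <;> refine Fin.lastCases ?_ (fun j' => ?_) j
  · simp
  · simp [(hh j').2]
  · simp [(hh i').1]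
  · simp

lemma det_B_mul_e (h : Matrix.SpecialLinearGroup (Fin (m+1)) kk)
    (hh : IsBlockDiagSL kk m h) :
    (h.1.submatrix Fin.castSucc Fin.castSucc).det * h.1 (Fin.last m) (Fin.last m) = 1 := by
  rw [← det_blk, ← blockdiag_coe h hh]
  exact h.2

lemma inv_coe_blk (h : Matrix.SpecialLinearGroup (Fin (m+1)) kk)
    (hh : IsBlockDiagSL kk m h) :
    (h⁻¹).1 = blk (h.1.submatrix Fin.castSucc Fin.castSucc)⁻¹
      (h.1 (Fin.last m) (Fin.last m))⁻¹ := by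
  set B := h.1.submatrix Fin.castSucc Fin.castSucc with hB
  set e := h.1 (Fin.last m) (Fin.last m) with he
  have hBe : B.det * e = 1 := det_B_mul_e h hh
  have hBd : B.det ≠ 0 := left_ne_zero_of_mul_eq_one hBe
  have hdet : (blk B⁻¹ e⁻¹).det = 1 := by
    rw [det_blk, Matrix.det_nonsing_inv, Ring.inverse_eq_inv', ← mul_inv, hBe, inv_one]
  have hmul : h⁻¹ = (⟨blk B⁻¹ e⁻¹, hdet⟩ : Matrix.SpecialLinearGroup (Fin (m+1)) kk) := by
    apply inv_eq_of_mul_eq_one_right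
    apply Subtype.ext
    show h.1 * blk B⁻¹ e⁻¹ = 1
    rw [blockdiag_coe h hh, ← hB, ← he, blk_mul_blk,
      Matrix.mul_nonsing_inv B (isUnit_iff_ne_zero.2 hBd), mul_inv_cancel₀
        (right_ne_zero_of_mul_eq_one hBe), blk_one]
  rw [hmul]

lemma MyFn_T_inv (i : Fin m) (t : Matrix.SpecialLinearGroup (Fin (m+1)) kk)
    (ht : IsDiagSL kk m t) (X : Matrix.SpecialLinearGroup (Fin (m+1)) kk) :
    MyFn kk m i (t * X) = MyFn kk m i X := by
  set d := fun r => t.1 r r with hd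
  have hcoe : (t * X).1 = Matrix.diagonal d * X.1 := by
    rw [Matrix.SpecialLinearGroup.coe_mul, ← diag_coe t ht]
  have hdet1 : ∏ r, d r = 1 := by
    rw [← Matrix.det_diagonal, ← diag_coe t ht]; exact t.2
  have hsub : (t * X).1.submatrix i.castSucc.succAbove Fin.castSucc =
      Matrix.of fun r c => d (i.castSucc.succAbove r) *
        (X.1.submatrix i.castSucc.succAbove Fin.castSucc) r c := by
    ext r c
    simp [hcoe, Matrix.submatrix_apply, Matrix.diagonal_mul]
  unfold MyFn
  rw [hsub, Matrix.det_mul_column, hcoe, Matrix.diagonal_mul]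
  have hp := Fin.prod_univ_succAbove d i.castSucc
  rw [hdet1] at hp
  have key : d i.castSucc * ∏ r, d (i.castSucc.succAbove r) = 1 := hp.symm
  linear_combination ((X.1.submatrix i.castSucc.succAbove Fin.castSucc).det *
    X.1 i.castSucc (Fin.last m)) * key

lemma MyFn_H_inv (i : Fin m) (h : Matrix.SpecialLinearGroup (Fin (m+1)) kk)
    (hh : IsBlockDiagSL kk m h) (X : Matrix.SpecialLinearGroup (Fin (m+1)) kk) :
    MyFn kk m i (X * h⁻¹) = MyFn kk m i X := by
  set B := h.1.submatrix Fin.castSucc Fin.castSucc with hB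
  set e := h.1 (Fin.last m) (Fin.last m) with he
  have hBe : B.det * e = 1 := det_B_mul_e h hh
  have hBd : B.det ≠ 0 := left_ne_zero_of_mul_eq_one hBe
  have hcoe : (X * h⁻¹).1 = X.1 * blk B⁻¹ e⁻¹ := by
    rw [Matrix.SpecialLinearGroup.coe_mul, inv_coe_blk h hh]
  have hsub : (X * h⁻¹).1.submatrix i.castSucc.succAbove Fin.castSucc =
      (X.1.submatrix i.castSucc.succAbove Fin.castSucc) * B⁻¹ := by
    ext r c
    rw [Matrix.submatrix_apply, hcoe, mul_blk_castSucc, Matrix.mul_apply]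
    simp
  unfold MyFn
  rw [hsub, Matrix.det_mul, hcoe, mul_blk_last, Matrix.det_nonsing_inv,
    Ring.inverse_eq_inv']
  have key : B.det⁻¹ * e⁻¹ = 1 := by rw [← mul_inv, hBe, inv_one]
  linear_combination ((X.1.submatrix i.castSucc.succAbove Fin.castSucc).det *
    X.1 i.castSucc (Fin.last m)) * key

end Group

section Regular
variable {kk : Type} [Field kk] {m : ℕ}

lemma det_submatrix_mem_regular {r : ℕ} (f g : Fin r → Fin (m+1)) :
    (fun X : Matrix.SpecialLinearGroup (Fin (m+1)) kk => (X.1.submatrix f g).det)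
      ∈ regularSL kk m := by
  have hrw : (fun X : Matrix.SpecialLinearGroup (Fin (m+1)) kk => (X.1.submatrix f g).det)
      = ∑ σ : Equiv.Perm (Fin r), (((Equiv.Perm.sign σ : ℤ) : kk)) •
          ∏ i : Fin r, (fun X : Matrix.SpecialLinearGroup (Fin (m+1)) kk =>
            X.1 (f (σ i)) (g i)) := by
    funext X
    rw [Finset.sum_apply, Matrix.det_apply']
    refine Finset.sum_congr rfl fun σ _ => ?_
    rw [Pi.smul_apply, Finset.prod_apply]
    simp [Matrix.submatrix_apply, smul_eq_mul]
  rw [hrw]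
  refine Subalgebra.sum_mem _ fun σ _ => ?_
  refine Subalgebra.smul_mem _ ?_ _
  exact Subalgebra.prod_mem _ fun i _ => Algebra.subset_adjoin ⟨(f (σ i), g i), rfl⟩

lemma coord_mem_regular (p q : Fin (m+1)) :
    (fun X : Matrix.SpecialLinearGroup (Fin (m+1)) kk => X.1 p q) ∈ regularSL kk m :=
  Algebra.subset_adjoin ⟨(p, q), rfl⟩

lemma MyFn_mem_regular (i : Fin m) : MyFn kk m i ∈ regularSL kk m :=
  Subalgebra.mul_mem _ (det_submatrix_mem_regular _ _) (coord_mem_regular _ _)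

end Regular

section PolyFn
variable {kk : Type} [Field kk] {σ σ' : Type}

/-- a function `(σ → kk) → kk` is polynomial -/
def IsPolyFn (f : (σ → kk) → kk) : Prop :=
  ∃ P : MvPolynomial σ kk, ∀ x, MvPolynomial.eval x P = f x

lemma IsPolyFn.const (c : kk) : IsPolyFn (σ := σ) (fun _ => c) :=
  ⟨MvPolynomial.C c, fun x => MvPolynomial.eval_C c⟩

lemma IsPolyFn.coord (i : σ) : IsPolyFn (fun x : σ → kk => x i) :=
  ⟨MvPolynomial.X i, fun x => MvPolynomial.eval_X i⟩

lemma IsPolyFn.add {f g : (σ → kk) → kk} (hf : IsPolyFn f) (hg : IsPolyFn g) :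
    IsPolyFn (fun x => f x + g x) := by
  obtain ⟨P, hP⟩ := hf; obtain ⟨Q, hQ⟩ := hg
  exact ⟨P + Q, fun x => by simp [hP x, hQ x]⟩

lemma IsPolyFn.mul {f g : (σ → kk) → kk} (hf : IsPolyFn f) (hg : IsPolyFn g) :
    IsPolyFn (fun x => f x * g x) := by
  obtain ⟨P, hP⟩ := hf; obtain ⟨Q, hQ⟩ := hg
  exact ⟨P * Q, fun x => by simp [hP x, hQ x]⟩

lemma IsPolyFn.sum {s : Finset σ'} {f : σ' → (σ → kk) → kk}
    (hf : ∀ i ∈ s, IsPolyFn (f i)) : IsPolyFn (fun x => ∑ i ∈ s, f i x) := by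
  classical
  induction s using Finset.induction with
  | empty => simpa using IsPolyFn.const 0
  | insert a s' hni ih =>
    simp only [Finset.sum_insert hni]
    exact (hf a (Finset.mem_insert_self a s')).add
      (ih fun i hi => hf i (Finset.mem_insert_of_mem hi))

lemma IsPolyFn.reindex (g : σ → σ') {f : (σ → kk) → kk} (hf : IsPolyFn f) :
    IsPolyFn (fun u : σ' → kk => f (u ∘ g)) := by
  obtain ⟨P, hP⟩ := hf
  exact ⟨MvPolynomial.rename g P, fun x => by rw [MvPolynomial.eval_rename, hP]⟩

/-- composing a regular function with a polynomial family of special linear matrices is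
polynomial -/
lemma comp_regular {m : ℕ} {f : Matrix.SpecialLinearGroup (Fin (m+1)) kk → kk}
    (hf : f ∈ regularSL kk m) (Γ : (σ → kk) → Matrix.SpecialLinearGroup (Fin (m+1)) kk)
    (hΓ : ∀ p q, IsPolyFn (fun u => (Γ u).1 p q)) :
    IsPolyFn (fun u => f (Γ u)) := by
  induction hf using Algebra.adjoin_induction with
  | mem x hx =>
    obtain ⟨⟨p, q⟩, rfl⟩ := hx
    exact hΓ p q
  | algebraMap r => exact IsPolyFn.const r
  | add x y hx hy hx' hy' => exact hx'.add hy'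
  | mul x y hx hy hx' hy' => exact hx'.mul hy'

lemma IsPolyFn.eq_zero [CharZero kk] {f g : (σ → kk) → kk} (hf : IsPolyFn f)
    (hg : IsPolyFn g) (hfg : ∀ u, f u * g u = 0) (hgne : ∃ u, g u ≠ 0) :
    ∀ u, f u = 0 := by
  obtain ⟨P, hP⟩ := hf; obtain ⟨Q, hQ⟩ := hg
  have hPQ : P * Q = 0 := by
    apply MvPolynomial.funext
    intro x
    simp [hP x, hQ x, hfg x]
  rcases mul_eq_zero.1 hPQ with h | h
  · intro u
    rw [← hP u, h, map_zero]
  · exfalso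
    obtain ⟨u, hu⟩ := hgne
    exact hu (by rw [← hQ u, h, map_zero])

end PolyFn

section XofA
variable {kk : Type} [Field kk] {m : ℕ}

/-- the canonical representative with invariants `a` -/
def XofA (a : Fin m → kk) : Matrix.SpecialLinearGroup (Fin (m+1)) kk :=
  ⟨shape (fun i => sgn m i * a i) (fun _ => 1) (1 + ∑ i, sgn m i * a i), by
    rw [det_shape]; simp⟩

lemma MyFn_shape (Y : Matrix.SpecialLinearGroup (Fin (m+1)) kk) (c y : Fin m → kk) (w : kk)
    (hY : Y.1 = shape c y w) (i : Fin m) : MyFn kk m i Y = sgn m i * c i * y i := by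
  unfold MyFn
  rw [hY, det_shape_minor, shape_cl]

lemma MyFn_XofA (a : Fin m → kk) (i : Fin m) : MyFn kk m i (XofA a) = a i := by
  rw [MyFn_shape (XofA a) _ _ _ rfl i, mul_one, ← mul_assoc, sgn_mul_self, one_mul]

lemma eq_XofA (Y : Matrix.SpecialLinearGroup (Fin (m+1)) kk) (c : Fin m → kk) (w : kk)
    (hY : Y.1 = shape c (fun _ => 1) w) :
    Y = XofA (fun i => MyFn kk m i Y) := by
  have hc : ∀ i, sgn m i * MyFn kk m i Y = c i := fun i => by
    rw [MyFn_shape Y c _ w hY i, mul_one, ← mul_assoc, sgn_mul_self, one_mul]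
  have hsum : ∑ i, sgn m i * MyFn kk m i Y = ∑ i, c i :=
    Finset.sum_congr rfl fun i _ => hc i
  have hdet := Y.2
  rw [hY, det_shape] at hdet
  simp only [mul_one] at hdet
  have hw : w = 1 + ∑ i, c i := by linear_combination hdet
  apply Subtype.ext
  rw [hY]
  show shape c _ w = shape _ _ _
  rw [show (fun i => sgn m i * MyFn kk m i Y) = c from funext hc, ← hw]

end XofA

section Orbit
variable {kk : Type} [Field kk] [CharZero kk] [IsAlgClosed kk] {m : ℕ}

/-- The function cutting out the "good" set -/
def Ffn (X : Matrix.SpecialLinearGroup (Fin (m+1)) kk) : kk :=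
  (X.1.submatrix Fin.castSucc Fin.castSucc).det * ∏ i : Fin m, X.1 i.castSucc (Fin.last m)

lemma orbit_eq (X : Matrix.SpecialLinearGroup (Fin (m+1)) kk) (hF : Ffn X ≠ 0)
    (φ : Matrix.SpecialLinearGroup (Fin (m+1)) kk → kk) (hφ : φ ∈ invTH kk m) :
    φ X = φ (XofA (fun i => MyFn kk m i X)) := by
  obtain ⟨hφT, hφH⟩ := hφ
  set C' := X.1.submatrix Fin.castSucc Fin.castSucc with hC'def
  have hC : C'.det ≠ 0 := left_ne_zero_of_mul (by rwa [Ffn] at hF)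
  have hy : ∀ i : Fin m, X.1 i.castSucc (Fin.last m) ≠ 0 := by
    have := right_ne_zero_of_mul (by rwa [Ffn] at hF)
    exact fun i => Finset.prod_ne_zero_iff.1 this i (Finset.mem_univ i)
  have hP : C'.det ^ m * ∏ i : Fin m, X.1 i.castSucc (Fin.last m) ≠ 0 :=
    mul_ne_zero (pow_ne_zero _ hC) (Finset.prod_ne_zero_iff.2 fun i _ => hy i)
  obtain ⟨τ, hτ⟩ := IsAlgClosed.exists_pow_nat_eq
    (C'.det ^ m * ∏ i : Fin m, X.1 i.castSucc (Fin.last m)) (Nat.succ_pos m)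
  have hτ0 : τ ≠ 0 := by
    intro h
    rw [h, zero_pow (Nat.succ_ne_zero m)] at hτ
    exact hP hτ.symm
  set tv : Fin (m+1) → kk :=
    Fin.lastCases τ (fun i => τ * C'.det⁻¹ * (X.1 i.castSucc (Fin.last m))⁻¹) with htv
  have htvc : ∀ i : Fin m, tv i.castSucc
      = τ * C'.det⁻¹ * (X.1 i.castSucc (Fin.last m))⁻¹ := fun i => by
    simp [htv]
  have htvl : tv (Fin.last m) = τ := by simp [htv]
  have htv0 : ∀ r, tv r ≠ 0 := by
    intro r
    refine Fin.lastCases ?_ (fun i => ?_) r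
    · rw [htvl]; exact hτ0
    · rw [htvc]
      exact mul_ne_zero (mul_ne_zero hτ0 (inv_ne_zero hC)) (inv_ne_zero (hy i))
  have hprodc : (∏ i : Fin m, tv i.castSucc) * τ = 1 := by
    have h1 : ∏ i : Fin m, tv i.castSucc
        = τ ^ m * (C'.det⁻¹) ^ m * ∏ i : Fin m, (X.1 i.castSucc (Fin.last m))⁻¹ := by
      simp only [htvc]
      rw [Finset.prod_mul_distrib, Finset.prod_mul_distrib]
      simp
    rw [h1, Finset.prod_inv_distrib, inv_pow]
    have h4 : τ ^ m * (C'.det ^ m)⁻¹ * (∏ i : Fin m, X.1 i.castSucc (Fin.last m))⁻¹ * τ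
        = τ ^ (m+1) * ((C'.det ^ m)⁻¹ * (∏ i : Fin m, X.1 i.castSucc (Fin.last m))⁻¹) := by
      rw [pow_succ]; ring
    rw [h4, hτ]
    field_simp
    exact div_self (Finset.prod_ne_zero_iff.2 fun i _ => hy i)
  have hprodtv : ∏ r, tv r = 1 := by
    rw [Fin.prod_univ_castSucc, htvl]
    exact hprodc
  set t : Matrix.SpecialLinearGroup (Fin (m+1)) kk :=
    ⟨Matrix.diagonal tv, by rw [Matrix.det_diagonal]; exact hprodtv⟩ with htdef
  have ht : IsDiagSL kk m t := fun i j hij => Matrix.diagonal_apply_ne _ hij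
  set T' : Matrix (Fin m) (Fin m) kk := Matrix.diagonal (fun i => tv i.castSucc) with hT'def
  set B : Matrix (Fin m) (Fin m) kk := T' * C' with hBdef
  have hdetB : B.det = (∏ i : Fin m, tv i.castSucc) * C'.det := by
    rw [hBdef, Matrix.det_mul, hT'def, Matrix.det_diagonal]
  have hB0 : B.det ≠ 0 := by
    rw [hdetB]
    exact mul_ne_zero (Finset.prod_ne_zero_iff.2 fun i _ => htv0 _) hC
  set h : Matrix.SpecialLinearGroup (Fin (m+1)) kk :=
    ⟨blk B B.det⁻¹, by rw [det_blk, mul_inv_cancel₀ hB0]⟩ with hhdef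
  have hh : IsBlockDiagSL kk m h := fun i => ⟨blk_cl B _ i, blk_lc B _ i⟩
  set Y := t * (X * h⁻¹) with hYdef
  have hYcoe : Y.1 = Matrix.diagonal tv * (X.1 * blk B⁻¹ B.det) := by
    have h1 : h.1.submatrix Fin.castSucc Fin.castSucc = B := by
      ext r c; exact blk_cc B _ r c
    have h2 : h.1 (Fin.last m) (Fin.last m) = B.det⁻¹ := blk_ll B _
    have h3 : (h⁻¹).1 = blk B⁻¹ B.det := by
      rw [inv_coe_blk h hh, h1, h2, inv_inv]
    rw [hYdef, Matrix.SpecialLinearGroup.coe_mul, Matrix.SpecialLinearGroup.coe_mul, h3]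
  have hT'inv : T'⁻¹ = Matrix.diagonal fun i => (tv i.castSucc)⁻¹ := by
    apply Matrix.inv_eq_right_inv
    rw [hT'def, Matrix.diagonal_mul_diagonal]
    have hfun : (fun i : Fin m => tv i.castSucc * (tv i.castSucc)⁻¹) = fun _ => 1 :=
      funext fun i => mul_inv_cancel₀ (htv0 _)
    rw [hfun, Matrix.diagonal_one]
  have hCB : C' * B⁻¹ = Matrix.diagonal fun i => (tv i.castSucc)⁻¹ := by
    rw [hBdef, Matrix.mul_inv_rev, ← Matrix.mul_assoc,
      Matrix.mul_nonsing_inv C' (isUnit_iff_ne_zero.2 hC), Matrix.one_mul, hT'inv]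
  have hcc : ∀ i j : Fin m, Y.1 i.castSucc j.castSucc = if i = j then 1 else 0 := by
    intro i j
    rw [hYcoe, Matrix.diagonal_mul]
    have : (X.1 * blk B⁻¹ B.det) i.castSucc j.castSucc = (C' * B⁻¹) i j := by
      rw [mul_blk_castSucc, Matrix.mul_apply]
      rfl
    rw [this, hCB, Matrix.diagonal_apply]
    by_cases hij : i = j
    · simp [hij, mul_inv_cancel₀ (htv0 j.castSucc)]
    · simp [hij]
  have hBdetval : B.det * τ = C'.det := by
    rw [hdetB]
    calc (∏ i : Fin m, tv i.castSucc) * C'.det * τ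
        = ((∏ i : Fin m, tv i.castSucc) * τ) * C'.det := by ring
      _ = C'.det := by rw [hprodc, one_mul]
  have hcl : ∀ i : Fin m, Y.1 i.castSucc (Fin.last m) = 1 := by
    intro i
    rw [hYcoe, Matrix.diagonal_mul, mul_blk_last, htvc]
    have hyi := hy i
    field_simp
    linear_combination hBdetval
  have hshape : Y.1 = shape (fun j => Y.1 (Fin.last m) j.castSucc) (fun _ => 1)
      (Y.1 (Fin.last m) (Fin.last m)) := by
    ext r c
    refine Fin.lastCases ?_ (fun i => ?_) r <;> refine Fin.lastCases ?_ (fun j => ?_) c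
    · rw [shape_ll]
    · rw [shape_lc]
    · rw [shape_cl, hcl]
    · rw [shape_cc, hcc]
  have hYX : Y = XofA (fun i => MyFn kk m i Y) := eq_XofA Y _ _ hshape
  have hMyY : ∀ i, MyFn kk m i Y = MyFn kk m i X := by
    intro i
    rw [hYdef, MyFn_T_inv i t ht (X * h⁻¹), MyFn_H_inv i h hh X]
  calc φ X = φ (X * h⁻¹) := (hφH h hh X).symm
    _ = φ Y := (hφT t ht (X * h⁻¹)).symm
    _ = φ (XofA fun i => MyFn kk m i X) := by
      rw [hYX]
      congr 1
      exact congrArg _ (funext hMyY)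

end Orbit

section Curves
variable {kk : Type} [Field kk] {m : ℕ}

def Lsum : List (Fin m) → Matrix (Fin (m+1)) (Fin (m+1)) kk
  | [] => 0
  | a :: l => Matrix.single a.castSucc (Fin.last m) 1 + Lsum l

lemma Lsum_mul_std (l : List (Fin m)) (a : Fin m) :
    (Matrix.single a.castSucc (Fin.last m) (1:kk)) * Lsum l = 0 := by
  induction l with
  | nil => simp [Lsum]
  | cons b l ih =>
    rw [Lsum, Matrix.mul_add, ih, add_zero,
      Matrix.single_mul_single_of_ne (h := (Fin.castSucc_lt_last b).ne')]

lemma prodE (l : List (Fin m)) :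
    ((l.map fun a => Matrix.transvection a.castSucc (Fin.last m) (1:kk))).prod
      = 1 + Lsum l := by
  induction l with
  | nil => simp [Lsum]
  | cons a l ih =>
    rw [List.map_cons, List.prod_cons, ih, Matrix.transvection, Matrix.add_mul,
      Matrix.one_mul, Matrix.mul_add, Matrix.mul_one, Lsum_mul_std, Lsum]
    abel

lemma Lsum_apply_row_last (l : List (Fin m)) (q : Fin (m+1)) :
    Lsum (kk := kk) l (Fin.last m) q = 0 := by
  induction l with
  | nil => simp [Lsum]
  | cons a l ih =>
    rw [Lsum]
    simp [ih, Matrix.single, (Fin.castSucc_lt_last a).ne]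

lemma Lsum_apply_col_cast (l : List (Fin m)) (p : Fin (m+1)) (q : Fin m) :
    Lsum (kk := kk) l p q.castSucc = 0 := by
  induction l with
  | nil => simp [Lsum]
  | cons a l ih =>
    rw [Lsum]
    simp [ih, Matrix.single, (Fin.castSucc_lt_last q).ne']

lemma Lsum_apply_cs_last (l : List (Fin m)) (hl : l.Nodup) (i : Fin m) :
    Lsum (kk := kk) l i.castSucc (Fin.last m) = if i ∈ l then 1 else 0 := by
  induction l with
  | nil => simp [Lsum]
  | cons a l ih =>
    rw [Lsum, List.nodup_cons] at *
    have hstd : Matrix.single a.castSucc (Fin.last m) (1:kk) i.castSucc (Fin.last m)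
        = if a = i then 1 else 0 := by
      simp [Matrix.single, Fin.castSucc_inj]
    rw [Matrix.add_apply, hstd, ih hl.2]
    by_cases hia : a = i
    · subst hia
      rw [if_pos rfl, if_pos (List.mem_cons_self), if_neg hl.1, add_zero]
    · rw [if_neg hia, zero_add]
      by_cases him : i ∈ l
      · rw [if_pos him, if_pos (List.mem_cons_of_mem a him)]
      · rw [if_neg him, if_neg ?_]
        rw [List.mem_cons]
        rintro (h | h)
        · exact hia h.symm
        · exact him h

lemma E_eq_shape :
    (1 : Matrix (Fin (m+1)) (Fin (m+1)) kk) + Lsum (List.finRange m)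
      = shape (fun _ => 0) (fun _ => 1) 1 := by
  ext p q
  rw [Matrix.add_apply]
  refine Fin.lastCases ?_ (fun i => ?_) p <;> refine Fin.lastCases ?_ (fun j => ?_) q
  · rw [Lsum_apply_row_last, shape_ll, Matrix.one_apply_eq, add_zero]
  · rw [Lsum_apply_col_cast, shape_lc, add_zero,
      Matrix.one_apply_ne (Fin.castSucc_lt_last j).ne']
  · rw [Lsum_apply_cs_last _ (List.nodup_finRange m), shape_cl,
      Matrix.one_apply_ne (Fin.castSucc_lt_last i).ne, if_pos (List.mem_finRange i), zero_add]
  · rw [Lsum_apply_col_cast, shape_cc, add_zero, Matrix.one_apply]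
    simp [Fin.castSucc_inj]

def Elist : List (Matrix.TransvectionStruct (Fin (m+1)) kk) :=
  (List.finRange m).map fun a => ⟨a.castSucc, Fin.last m, (Fin.castSucc_lt_last a).ne, 1⟩

lemma Elist_prod :
    ((Elist (kk := kk) (m := m)).map Matrix.TransvectionStruct.toMatrix).prod
      = shape (fun _ => 0) (fun _ => 1) 1 := by
  rw [Elist, List.map_map, ← E_eq_shape, ← prodE]
  rfl

/-- scaled transvection curves -/
def tcurve : List (Matrix.TransvectionStruct (Fin (m+1)) kk) → (ℕ → kk) →
    Matrix (Fin (m+1)) (Fin (m+1)) kk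
  | [], _ => 1
  | t :: L, u => Matrix.transvection t.i t.j (u 0 * t.c) * tcurve L (fun j => u (j+1))

lemma tcurve_zero (L : List (Matrix.TransvectionStruct (Fin (m+1)) kk)) :
    tcurve L (fun _ => 0) = 1 := by
  induction L with
  | nil => rfl
  | cons t L ih => rw [tcurve, ih, Matrix.mul_one, zero_mul, Matrix.transvection_zero]

lemma tcurve_one (L : List (Matrix.TransvectionStruct (Fin (m+1)) kk)) :
    tcurve L (fun _ => 1) = (L.map Matrix.TransvectionStruct.toMatrix).prod := by
  induction L with
  | nil => rfl
  | cons t L ih => rw [tcurve, ih, List.map_cons, List.prod_cons, one_mul]; rfl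

lemma tcurve_det (L : List (Matrix.TransvectionStruct (Fin (m+1)) kk)) (u : ℕ → kk) :
    (tcurve L u).det = 1 := by
  induction L generalizing u with
  | nil => exact Matrix.det_one
  | cons t L ih =>
    rw [tcurve, Matrix.det_mul, Matrix.det_transvection_of_ne _ _ t.hij, one_mul, ih]

lemma tcurve_poly (L : List (Matrix.TransvectionStruct (Fin (m+1)) kk))
    (p q : Fin (m+1)) : IsPolyFn (fun u : ℕ → kk => tcurve L u p q) := by
  induction L generalizing p q with
  | nil => exact IsPolyFn.const _
  | cons t L ih =>
    have : (fun u : ℕ → kk => tcurve (t :: L) u p q)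
        = fun u : ℕ → kk => ∑ r : Fin (m+1),
            (((1 : Matrix (Fin (m+1)) (Fin (m+1)) kk) p r)
              + u 0 * (Matrix.single t.i t.j t.c p r))
              * tcurve L (u ∘ Nat.succ) r q := by
      funext u
      rw [tcurve, Matrix.mul_apply]
      refine Finset.sum_congr rfl fun r _ => ?_
      congr 1
      rw [Matrix.transvection, Matrix.add_apply]
      congr 1
      by_cases hpr : t.i = p ∧ t.j = r
      · obtain ⟨h1, h2⟩ := hpr; subst h1; subst h2; simp [Matrix.single]
      · rw [Matrix.single_apply_of_ne (h := hpr),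
          Matrix.single_apply_of_ne (h := hpr), mul_zero]
    rw [this]
    refine IsPolyFn.sum fun r _ => IsPolyFn.mul ?_ ?_
    · exact (IsPolyFn.const _).add ((IsPolyFn.coord 0).mul (IsPolyFn.const _))
    · exact (ih r q).reindex Nat.succ

end Curves

section Density
variable {kk : Type} [Field kk] [CharZero kk] [IsAlgClosed kk] {m : ℕ}

lemma matmul_poly {σ : Type} {M N : (σ → kk) → Matrix (Fin (m+1)) (Fin (m+1)) kk}
    (hM : ∀ p q, IsPolyFn fun u => M u p q) (hN : ∀ p q, IsPolyFn fun u => N u p q)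
    (p q : Fin (m+1)) : IsPolyFn fun u => (M u * N u) p q := by
  have hrw : (fun u => (M u * N u) p q) = fun u => ∑ r, M u p r * N u r q :=
    funext fun u => Matrix.mul_apply
  rw [hrw]
  exact IsPolyFn.sum fun r _ => (hM p r).mul (hN r q)

lemma Ffn_mem_regular : (Ffn : Matrix.SpecialLinearGroup (Fin (m+1)) kk → kk)
    ∈ regularSL kk m := by
  have hrw : (Ffn : Matrix.SpecialLinearGroup (Fin (m+1)) kk → kk)
      = (fun X : Matrix.SpecialLinearGroup (Fin (m+1)) kk =>
          (X.1.submatrix Fin.castSucc Fin.castSucc).det) *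
        ∏ i : Fin m, (fun X : Matrix.SpecialLinearGroup (Fin (m+1)) kk =>
          X.1 i.castSucc (Fin.last m)) := by
    funext X
    rw [Pi.mul_apply, Finset.prod_apply]
    rfl
  rw [hrw]
  exact Subalgebra.mul_mem _ (det_submatrix_mem_regular _ _)
    (Subalgebra.prod_mem _ fun i _ => coord_mem_regular _ _)

lemma vanish_of_vanish_good (f : Matrix.SpecialLinearGroup (Fin (m+1)) kk → kk)
    (hf : f ∈ regularSL kk m) (h0 : ∀ X, Ffn X ≠ 0 → f X = 0) : ∀ X, f X = 0 := by
  intro X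
  obtain ⟨L, L', D, hdiag⟩ :=
    Matrix.Pivot.exists_list_transvec_mul_mul_list_transvec_eq_diagonal X.1
  have hdet : ∀ x : ℕ ⊕ ℕ ⊕ ℕ → kk,
      (tcurve L (fun j => x (Sum.inl j)) * (X.1 *
        (tcurve L' (fun j => x (Sum.inr (Sum.inl j))) *
          tcurve Elist (fun j => x (Sum.inr (Sum.inr j)))))).det = 1 := by
    intro x
    rw [Matrix.det_mul, Matrix.det_mul, Matrix.det_mul, tcurve_det, tcurve_det, tcurve_det,
      X.2]
    norm_num
  set Γ : (ℕ ⊕ ℕ ⊕ ℕ → kk) → Matrix.SpecialLinearGroup (Fin (m+1)) kk := fun x =>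
    ⟨tcurve L (fun j => x (Sum.inl j)) * (X.1 *
        (tcurve L' (fun j => x (Sum.inr (Sum.inl j))) *
          tcurve Elist (fun j => x (Sum.inr (Sum.inr j))))), hdet x⟩ with hΓ
  have hpoly : ∀ p q, IsPolyFn fun x => (Γ x).1 p q := by
    intro p q
    refine matmul_poly (fun p q => ?_) (fun p q => ?_) p q
    · exact (tcurve_poly L p q).reindex Sum.inl
    · refine matmul_poly (M := fun x => X.1)
        (N := fun x => tcurve L' (fun j => x (Sum.inr (Sum.inl j))) *
          tcurve Elist (fun j => x (Sum.inr (Sum.inr j))))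
        (fun p q => IsPolyFn.const _) (fun p q => ?_) p q
      refine matmul_poly
        (M := fun x => tcurve L' (fun j => x (Sum.inr (Sum.inl j))))
        (N := fun x => tcurve Elist (fun j => x (Sum.inr (Sum.inr j))))
        (fun p q => ?_) (fun p q => ?_) p q
      · exact (tcurve_poly L' p q).reindex (Sum.inr ∘ Sum.inl)
      · exact (tcurve_poly Elist p q).reindex (Sum.inr ∘ Sum.inr)
  have hFfnpoly : IsPolyFn fun x => Ffn (Γ x) := comp_regular (Ffn_mem_regular (kk := kk) (m := m)) Γ hpoly
  have hfpoly : IsPolyFn fun x => f (Γ x) := comp_regular hf Γ hpoly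
  have hzero : ∀ x, f (Γ x) * Ffn (Γ x) = 0 := by
    intro x
    by_cases hx : Ffn (Γ x) = 0
    · rw [hx, mul_zero]
    · rw [h0 _ hx, zero_mul]
  have hgood : ∃ x, Ffn (Γ x) ≠ 0 := by
    refine ⟨fun _ => 1, ?_⟩
    have hcoe : (Γ fun _ => 1).1 = Matrix.diagonal D * shape (fun _ => 0) (fun _ => 1) 1 := by
      show tcurve L (fun _ => 1) * (X.1 * (tcurve L' (fun _ => 1) *
        tcurve Elist (fun _ => 1))) = _
      rw [tcurve_one, tcurve_one, tcurve_one, Elist_prod, ← Matrix.mul_assoc,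
        ← Matrix.mul_assoc, hdiag]
    have hDprod : ∏ r, D r = 1 := by
      rw [← Matrix.det_diagonal, ← hdiag, Matrix.det_mul, Matrix.det_mul,
        Matrix.TransvectionStruct.det_toMatrix_prod, Matrix.TransvectionStruct.det_toMatrix_prod, X.2]
      norm_num
    have hD0 : ∀ r, D r ≠ 0 := fun r =>
      Finset.prod_ne_zero_iff.1 (hDprod ▸ one_ne_zero) r (Finset.mem_univ r)
    have hsub : (Matrix.diagonal D * shape (fun _ => 0) (fun _ => 1) 1).submatrix
        Fin.castSucc Fin.castSucc = Matrix.diagonal (fun i : Fin m => D i.castSucc) := by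
      ext i j
      rw [Matrix.submatrix_apply, Matrix.diagonal_mul, shape_cc]
      by_cases hij : i = j
      · subst hij; simp
      · simp [hij, Matrix.diagonal_apply_ne _ hij]
    rw [Ffn, hcoe, hsub, Matrix.det_diagonal]
    refine mul_ne_zero (Finset.prod_ne_zero_iff.2 fun i _ => hD0 _)
      (Finset.prod_ne_zero_iff.2 fun i _ => ?_)
    rw [Matrix.diagonal_mul, shape_cl, mul_one]
    exact hD0 _
  have hvanish := hfpoly.eq_zero hFfnpoly hzero hgood
  have hX0 : Γ (fun _ => 0) = X := by
    apply Subtype.ext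
    show tcurve L (fun _ => 0) * (X.1 * (tcurve L' (fun _ => 0) *
      tcurve Elist (fun _ => 0))) = X.1
    rw [tcurve_zero, tcurve_zero, tcurve_zero, Matrix.one_mul, Matrix.mul_one,
      Matrix.mul_one]
  rw [← hX0]
  exact hvanish (fun _ => 0)

end Density

section Final
variable {kk : Type} [Field kk] [CharZero kk] [IsAlgClosed kk] {m : ℕ}

lemma MyFn_mem_invTH (i : Fin m) : MyFn kk m i ∈ invTH kk m :=
  ⟨fun t ht X => MyFn_T_inv i t ht X, fun h hh X => MyFn_H_inv i h hh X⟩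

lemma aeval_pi_apply (F : Fin m → (Matrix.SpecialLinearGroup (Fin (m+1)) kk → kk))
    (P : MvPolynomial (Fin m) kk) (X : Matrix.SpecialLinearGroup (Fin (m+1)) kk) :
    (MvPolynomial.aeval F P) X = MvPolynomial.eval (fun i => F i X) P := by
  induction P using MvPolynomial.induction_on with
  | C a => simp [Pi.algebraMap_apply]
  | add p q hp hq => simp [hp, hq]
  | mul_X p i hp => simp [hp]

lemma XofA_poly (p q : Fin (m+1)) :
    IsPolyFn (fun a : Fin m → kk => (XofA a).1 p q) := by
  refine Fin.lastCases ?_ (fun i => ?_) p <;> refine Fin.lastCases ?_ (fun j => ?_) q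
  · have hrw : (fun a : Fin m → kk => (XofA a).1 (Fin.last m) (Fin.last m))
        = fun a => 1 + ∑ i, sgn m i * a i := funext fun a => shape_ll _ _ _
    rw [hrw]
    exact (IsPolyFn.const 1).add (IsPolyFn.sum fun i _ =>
      (IsPolyFn.const _).mul (IsPolyFn.coord i))
  · have hrw : (fun a : Fin m → kk => (XofA a).1 (Fin.last m) j.castSucc)
        = fun a => sgn m j * a j := funext fun a => shape_lc _ _ _ _
    rw [hrw]
    exact (IsPolyFn.const _).mul (IsPolyFn.coord j)
  · have hrw : (fun a : Fin m → kk => (XofA a).1 i.castSucc (Fin.last m))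
        = fun _ => 1 := funext fun a => shape_cl _ _ _ _
    rw [hrw]
    exact IsPolyFn.const 1
  · have hrw : (fun a : Fin m → kk => (XofA a).1 i.castSucc j.castSucc)
        = fun _ => if i = j then 1 else 0 := funext fun a => shape_cc _ _ _ _ _
    rw [hrw]
    exact IsPolyFn.const _

lemma indep : AlgebraicIndependent kk (MyFn kk m) := by
  rw [algebraicIndependent_iff]
  intro p hp
  apply MvPolynomial.funext
  intro a
  have h1 : (MvPolynomial.aeval (MyFn kk m) p) (XofA a) = 0 := by
    rw [hp]
    rfl
  rw [aeval_pi_apply] at h1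
  have h2 : (fun i => MyFn kk m i (XofA a)) = a := funext fun i => MyFn_XofA a i
  rw [h2] at h1
  rw [h1, map_zero]

lemma adjoin_le_inf :
    Algebra.adjoin kk (Set.range (MyFn kk m)) ≤ regularSL kk m ⊓ invTH kk m := by
  rw [Algebra.adjoin_le_iff]
  rintro y ⟨i, rfl⟩
  exact ⟨MyFn_mem_regular i, MyFn_mem_invTH i⟩

lemma inf_le_adjoin (φ : Matrix.SpecialLinearGroup (Fin (m+1)) kk → kk)
    (hreg : φ ∈ regularSL kk m) (hinv : φ ∈ invTH kk m) :
    φ ∈ Algebra.adjoin kk (Set.range (MyFn kk m)) := by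
  obtain ⟨P, hP⟩ : IsPolyFn (fun a : Fin m → kk => φ (XofA a)) :=
    comp_regular hreg XofA XofA_poly
  have hmem : MvPolynomial.aeval (MyFn kk m) P ∈ Algebra.adjoin kk (Set.range (MyFn kk m)) := by
    rw [Algebra.adjoin_range_eq_range_aeval]
    exact ⟨P, rfl⟩
  have hφeq : φ = MvPolynomial.aeval (MyFn kk m) P := by
    have hreg' : (fun X => φ X - (MvPolynomial.aeval (MyFn kk m) P) X) ∈ regularSL kk m :=
      Subalgebra.sub_mem _ hreg
        (adjoin_le_inf hmem).1
    have hvan : ∀ X, Ffn X ≠ 0 →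
        φ X - (MvPolynomial.aeval (MyFn kk m) P) X = 0 := by
      intro X hX
      rw [aeval_pi_apply, hP (fun i => MyFn kk m i X)]
      exact sub_eq_zero_of_eq (orbit_eq X hX φ hinv)
    have := vanish_of_vanish_good _ hreg' hvan
    funext X
    exact sub_eq_zero.1 (this X)
  rw [hφeq]
  exact hmem

end Final
end Stmt10Aux


/-- the algebra of `(T × S(GL_n × GL₁))`-invariant regular functions on
`SL_{n+1}` is a polynomial algebra freely generated by the `n` functions
`M₁y₁, …, Mₙyₙ`. -/
theorem stmt10 :
    AlgebraicIndependent k (MyFn k n) ∧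
    (regularSL k n ⊓ invTH k n :
        Subalgebra k (Matrix.SpecialLinearGroup (Fin (n + 1)) k → k))
      = Algebra.adjoin k (Set.range (MyFn k n)) := by
  constructor
  · exact Stmt10Aux.indep
  · apply le_antisymm
    · intro φ hφ
      rw [Algebra.mem_inf] at hφ
      exact Stmt10Aux.inf_le_adjoin φ hφ.1 hφ.2
    · exact Stmt10Aux.adjoin_le_inf
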